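/- Let C be a smooth projective curve and M a line bundle on C with h^0(M)=2 such that |M| is base point free. Let L be a line bundle with h^0(L) ≥ 1, and let m ≥ 1. Then the kernel of the multiplication map φ_m : H^0(C,L) ⊗ S^m H^0(C,M) → H^0(C, L+mM) is naturally isomorphic to H^0(C, L−M)^{⊕m}. Explicitly, after choosing a basis s,t of H^0(C,M), the element of ker(φ_m) corresponding to (z_1,…,z_m) is z_1t⊗s^m + (z_2t−z_1s)⊗s^{m−1}t + … + (z_mt−z_{m−1}s)⊗st^{m−1} − z_ms⊗t^m. -/
import Mathlib


/-- Lemma 1: extended base point free pencil trick.  Model: the section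
spaces `H n = H⁰(C, L + nM)` are `F`-subspaces of the integral section ring `R`;
`s, t` is a basis of the 2-dimensional `H⁰(M)` and base point freeness of `|M|`
(`Z(s) ∩ Z(t) = ∅`) is recorded by the divisibility property `hbpf`.  Writing, after the
choice of basis `s, t`, an element of `H⁰(L) ⊗ Sᵐ H⁰(M)` as `∑ᵢ xᵢ ⊗ s^{m-i} t^i`, the
kernel of `φ_m : H⁰(L) ⊗ Sᵐ H⁰(M) → H⁰(L + mM)` consists exactly of the elements with
`xᵢ = z_{i+1} t - zᵢ s` for some `z₁, …, z_m ∈ H⁰(L - M)` (with `z₀ = z_{m+1} = 0`), and the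
`(z₁, …, z_m)` are uniquely determined, so `ker φ_m ≅ H⁰(L - M)^{⊕ m}`. -/
theorem stmt1 (F R : Type*) [Field F] [CommRing R] [IsDomain R] [Algebra F R]
    (H : ℤ → Submodule F R)
    (s t : R) (hli : LinearIndependent F ![s, t])
    (hs : ∀ n : ℤ, ∀ x ∈ H n, s * x ∈ H (n + 1))
    (ht : ∀ n : ℤ, ∀ x ∈ H n, t * x ∈ H (n + 1))
    (hbpf : ∀ n : ℤ, ∀ y ∈ H n, ∀ z ∈ H n, s * y = t * z →
      ∃ w ∈ H (n - 1), y = t * w ∧ z = s * w)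
    (hL : H 0 ≠ ⊥)
    (m : ℕ) (hm : 1 ≤ m) :
    (∀ x : ℕ → R, (∀ i, i ≤ m → x i ∈ H 0) →
      ((∑ i ∈ Finset.range (m + 1), s ^ (m - i) * t ^ i * x i = 0) ↔
        ∃ z : ℕ → R, z 0 = 0 ∧ z (m + 1) = 0 ∧
          (∀ j, 1 ≤ j → j ≤ m → z j ∈ H (-1)) ∧
          ∀ i, i ≤ m → x i = z (i + 1) * t - z i * s)) ∧
    (∀ z z' : ℕ → R, z 0 = 0 → z' 0 = 0 → z (m + 1) = 0 → z' (m + 1) = 0 →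
      (∀ j, 1 ≤ j → j ≤ m → z j ∈ H (-1)) →
      (∀ j, 1 ≤ j → j ≤ m → z' j ∈ H (-1)) →
      (∀ i, i ≤ m → z (i + 1) * t - z i * s = z' (i + 1) * t - z' i * s) →
      ∀ j, j ≤ m + 1 → z j = z' j) := by
  have ht0 : t ≠ 0 := by
    have := hli.ne_zero 1
    simpa using this
  -- membership lemmas
  have hmemS : ∀ (n : ℤ) (j : ℕ), ∀ a ∈ H n, s ^ j * a ∈ H (n + j) := by
    intro n j
    induction j with
    | zero => intro a ha; simpa using ha
    | succ j ih =>
      intro a ha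
      have := hs (n + j) _ (ih a ha)
      have e : (n + (j:ℤ)) + 1 = n + ((j+1 : ℕ) : ℤ) := by push_cast; ring
      rw [e] at this
      have e2 : s ^ (j+1) * a = s * (s ^ j * a) := by ring
      rw [e2]; exact this
  have hmemT : ∀ (n : ℤ) (j : ℕ), ∀ a ∈ H n, t ^ j * a ∈ H (n + j) := by
    intro n j
    induction j with
    | zero => intro a ha; simpa using ha
    | succ j ih =>
      intro a ha
      have := ht (n + j) _ (ih a ha)
      have e : (n + (j:ℤ)) + 1 = n + ((j+1 : ℕ) : ℤ) := by push_cast; ring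
      rw [e] at this
      have e2 : t ^ (j+1) * a = t * (t ^ j * a) := by ring
      rw [e2]; exact this
  -- divisibility lemma
  have hdiv : ∀ k : ℕ, ∀ a ∈ H 0, ∀ b ∈ H k, s ^ (k+1) * a = t * b →
      ∃ w ∈ H (-1), a = t * w := by
    intro k
    induction k with
    | zero =>
      intro a ha b hb h
      obtain ⟨w, hw, h1, _⟩ := hbpf 0 a ha b (by simpa using hb) (by simpa using h)
      exact ⟨w, by simpa using hw, h1⟩
    | succ k ih =>
      intro a ha b hb h
      have hsa : s ^ (k+1) * a ∈ H (k+1) := by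
        have := hmemS 0 (k+1) a ha
        simpa using this
      obtain ⟨w, hw, h1, _⟩ := hbpf (k+1) (s ^ (k+1) * a) hsa b (by exact_mod_cast hb)
        (by rw [← h]; ring)
      have hw' : w ∈ H k := by
        have e : ((k:ℤ)+1) - 1 = (k:ℤ) := by ring
        rwa [e] at hw
      exact ih a ha w hw' h1
  -- main existence direction, by induction on m
  have main : ∀ m : ℕ, ∀ x : ℕ → R, (∀ i, i ≤ m → x i ∈ H 0) →
      (∑ i ∈ Finset.range (m + 1), s ^ (m - i) * t ^ i * x i = 0) →
      ∃ z : ℕ → R, z 0 = 0 ∧ z (m + 1) = 0 ∧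
        (∀ j, 1 ≤ j → j ≤ m → z j ∈ H (-1)) ∧
        ∀ i, i ≤ m → x i = z (i + 1) * t - z i * s := by
    intro m
    induction m with
    | zero =>
      intro x hx h
      refine ⟨fun _ => 0, rfl, rfl, by intro j h1 h2; omega, ?_⟩
      intro i hi
      interval_cases i
      simpa using h
    | succ m ih =>
      intro x hx h
      -- extract z1
      have h' := h
      rw [Finset.sum_range_succ'] at h'
      -- h' : ∑ i in range (m+1), s^(m+1-(i+1)) * t^(i+1) * x (i+1) + s^(m+1-0)*t^0*x 0 = 0
      set b : R := -∑ i ∈ Finset.range (m + 1), s ^ (m - i) * t ^ i * x (i + 1) with hb_def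
      have hbmem : b ∈ H m := by
        refine Submodule.neg_mem _ (Submodule.sum_mem _ ?_)
        intro i hi
        rw [Finset.mem_range] at hi
        have hi' : i ≤ m := by omega
        have h1 : t ^ i * x (i+1) ∈ H (0 + i) := hmemT 0 i _ (hx (i+1) (by omega))
        have h2 : s ^ (m - i) * (t ^ i * x (i+1)) ∈ H ((0 + i) + (m - i : ℕ)) :=
          hmemS _ _ _ h1
        have e : ((0:ℤ) + i) + ((m - i : ℕ) : ℤ) = (m : ℤ) := by
          rw [Nat.cast_sub hi']; ring
        rw [e] at h2
        rw [← mul_assoc] at h2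
        exact h2
      have heq : s ^ (m + 1) * x 0 = t * b := by
        rw [hb_def, mul_neg, Finset.mul_sum]
        have : ∑ i ∈ Finset.range (m + 1), s ^ (m + 1 - (i + 1)) * t ^ (i + 1) * x (i + 1)
            = ∑ i ∈ Finset.range (m + 1), t * (s ^ (m - i) * t ^ i * x (i + 1)) := by
          refine Finset.sum_congr rfl fun i hi => ?_
          rw [Finset.mem_range] at hi
          have e : m + 1 - (i + 1) = m - i := by omega
          rw [e]; ring
        rw [this] at h'
        simp only [Nat.sub_zero, pow_zero, mul_one] at h'
        linear_combination h'
      obtain ⟨z1, hz1mem, hz1⟩ := hdiv m (x 0) (hx 0 (by omega)) b hbmem heq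
      -- new sequence
      set x' : ℕ → R := fun j => if j = 0 then x 1 + s * z1 else x (j + 1) with hx'_def
      have hx'mem : ∀ i, i ≤ m → x' i ∈ H 0 := by
        intro i hi
        rcases Nat.eq_zero_or_pos i with rfl | hpos
        · simp only [hx'_def, if_pos rfl]
          refine Submodule.add_mem _ (hx 1 (by omega)) ?_
          have := hs (-1) z1 hz1mem
          simpa using this
        · simp only [hx'_def, if_neg (by omega : i ≠ 0)]
          exact hx (i + 1) (by omega)
      have hsum' : ∑ j ∈ Finset.range (m + 1), s ^ (m - j) * t ^ j * x' j = 0 := by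
        have key : t * ∑ j ∈ Finset.range (m + 1), s ^ (m - j) * t ^ j * x' j
            = ∑ i ∈ Finset.range (m + 2), s ^ (m + 1 - i) * t ^ i * x i := by
          rw [Finset.mul_sum, Finset.sum_range_succ', Finset.sum_range_succ',
            Finset.sum_range_succ']
          have e1 : ∑ j ∈ Finset.range m, t * (s ^ (m - (j+1)) * t ^ (j+1) * x' (j+1))
              = ∑ j ∈ Finset.range m, s ^ (m + 1 - (j+1+1)) * t ^ (j+1+1) * x (j+1+1) := by
            refine Finset.sum_congr rfl fun j hj => ?_
            rw [Finset.mem_range] at hj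
            have e : m + 1 - (j + 1 + 1) = m - (j + 1) := by omega
            rw [e]
            simp only [hx'_def, if_neg (by omega : j + 1 ≠ 0)]
            ring
          rw [e1]
          simp only [hx'_def, if_pos rfl, pow_zero, Nat.sub_zero]
          rw [hz1]
          have e2 : m + 1 - (0 + 1) = m := by omega
          rw [e2]
          ring
        rw [h] at key
        rcases mul_eq_zero.mp key with h1 | h1
        · exact absurd h1 ht0
        · exact h1
      obtain ⟨z', hz'0, hz'm, hz'mem, hz'x⟩ := ih x' hx'mem hsum'
      refine ⟨fun j => match j with | 0 => 0 | 1 => z1 | (k+2) => z' (k+1),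
        rfl, hz'm, ?_, ?_⟩
      · intro j h1 h2
        match j, h1, h2 with
        | 1, _, _ => exact hz1mem
        | (k+2), _, h2 => exact hz'mem (k+1) (by omega) (by omega)
      · intro i hi
        match i, hi with
        | 0, _ =>
          show x 0 = z1 * t - 0 * s
          rw [hz1]; ring
        | 1, hi =>
          show x 1 = z' 1 * t - z1 * s
          have := hz'x 0 (by omega)
          simp only [hx'_def, if_pos rfl, hz'0] at this
          linear_combination this
        | (k+2), hi =>
          show x (k+2) = z' (k+2) * t - z' (k+1) * s
          have := hz'x (k + 1) (by omega)
          simp only [hx'_def, if_neg (by omega : k + 1 ≠ 0)] at this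
          exact this
  constructor
  · intro x hx
    constructor
    · exact main m x hx
    · rintro ⟨z, hz0, hzm, hzmem, hzx⟩
      have : ∑ i ∈ Finset.range (m + 1), s ^ (m - i) * t ^ i * x i
          = ∑ i ∈ Finset.range (m + 1),
              (s ^ (m + 1 - (i+1)) * t ^ (i+1) * z (i+1) - s ^ (m + 1 - i) * t ^ i * z i) := by
        refine Finset.sum_congr rfl fun i hi => ?_
        rw [Finset.mem_range] at hi
        have hi' : i ≤ m := by omega
        rw [hzx i hi']
        have e1 : m + 1 - (i + 1) = m - i := by omega
        have e2 : m + 1 - i = (m - i) + 1 := by omega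
        rw [e1, e2, pow_succ]
        ring
      rw [this, Finset.sum_range_sub (fun j => s ^ (m + 1 - j) * t ^ j * z j)]
      simp [hz0, hzm]
  · intro z z' hz0 hz'0 hzm hz'm hzmem hz'mem hdiff
    intro j
    induction j with
    | zero => intro _; rw [hz0, hz'0]
    | succ j ih =>
      intro hj
      have hj' : j ≤ m := by omega
      have h1 := hdiff j hj'
      have h2 := ih (by omega)
      have h3 : (z (j + 1) - z' (j + 1)) * t = 0 := by linear_combination h1 + s * h2
      rcases mul_eq_zero.mp h3 with h4 | h4
      · exact sub_eq_zero.mp h4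
      · exact absurd h4 ht0
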